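/- Let n and d be positive integers and Δ > 0 a real number with 2Δ/n < 1 − cos(π/(2d)). Consider the real polynomial p(x) = x·(x − 1/n)·(x − 2/n)·T_d(1 − Δ·x). Then p has degree d + 3 and exactly d + 3 pairwise distinct real roots, namely 0, 1/n, 2/n together with r_m := (1/Δ)·(1 − cos((2m−1)π/(2d))) for m = 1, …, d; moreover 2/n < r₁ < r₂ < ⋯ < r_d. -/

import Mathlib

open Polynomial

lemma myT_natDegree (k : ℕ) : (Polynomial.Chebyshev.T ℝ (k : ℤ)).natDegree = k := by
  induction k using Nat.twoStepInduction with
  | zero => simp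
  | one => simp
  | more m ih1 ih2 =>
    have hcast : ((m + 2 : ℕ) : ℤ) = (m : ℤ) + 2 := by push_cast; ring
    have hcast1 : ((m + 1 : ℕ) : ℤ) = (m : ℤ) + 1 := by push_cast; ring
    rw [hcast, Polynomial.Chebyshev.T_add_two]
    have ih1' : (Polynomial.Chebyshev.T ℝ ((m : ℤ) + 1)).natDegree = m + 1 := by
      rw [← hcast1]; exact ih2
    have hT1 : Polynomial.Chebyshev.T ℝ ((m : ℤ) + 1) ≠ 0 := by
      intro h; rw [h, natDegree_zero] at ih1'; omega
    have hmain : ((2 : ℝ[X]) * X * Polynomial.Chebyshev.T ℝ ((m : ℤ) + 1)).natDegree = m + 2 := by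
      have h2 : (2 : ℝ[X]) = C 2 := (map_ofNat C 2).symm
      rw [mul_assoc, h2, natDegree_C_mul (two_ne_zero), natDegree_mul X_ne_zero hT1,
        natDegree_X, ih1']
      omega
    rw [natDegree_sub_eq_left_of_natDegree_lt, hmain]
    rw [hmain, ih1]; omega

/-- For positive integers `n, d` and a real `Δ > 0` with
`2Δ/n < 1 - cos(π/(2d))`, the polynomial `p(x) = x (x - 1/n)(x - 2/n) T_d(1 - Δ x)`
has degree `d + 3` and exactly `d + 3` pairwise distinct real roots, namely
`0, 1/n, 2/n` and `r_m = (1/Δ)(1 - cos((2m-1)π/(2d)))` for `1 ≤ m ≤ d`, with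
`2/n < r_1 < r_2 < ⋯ < r_d`. -/
theorem chebyshev_construction_roots (n d : ℕ) (hn : 0 < n) (hd : 0 < d)
    (Δ : ℝ) (hΔ : 0 < Δ)
    (hgap : 2 * Δ / n < 1 - Real.cos (Real.pi / (2 * d)))
    (p : Polynomial ℝ)
    (hp : p = X * (X - C (1 / (n : ℝ))) * (X - C (2 / (n : ℝ))) *
        ((Polynomial.Chebyshev.T ℝ d).comp (C 1 - C Δ * X)))
    (r : ℕ → ℝ)
    (hr : ∀ m : ℕ, r m = (1 / Δ) * (1 - Real.cos ((2 * (m : ℝ) - 1) * Real.pi / (2 * d)))) :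
    p.natDegree = d + 3 ∧
    (∀ x : ℝ, p.eval x = 0 ↔
      (x = 0 ∨ x = 1 / n ∨ x = 2 / n ∨ ∃ m : ℕ, 1 ≤ m ∧ m ≤ d ∧ x = r m)) ∧
    2 / (n : ℝ) < r 1 ∧
    (∀ m : ℕ, 1 ≤ m → m < d → r m < r (m + 1)) := by
  have hπ := Real.pi_pos
  have hd' : (0 : ℝ) < d := by exact_mod_cast hd
  have hn' : (0 : ℝ) < n := by exact_mod_cast hn
  set q : ℝ[X] := (Polynomial.Chebyshev.T ℝ d).comp (C 1 - C Δ * X) with hq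
  -- degree of q
  have hlin : ((C 1 - C Δ * X : ℝ[X])).natDegree = 1 := by
    have : (C 1 - C Δ * X : ℝ[X]) = C (-Δ) * X + C 1 := by rw [map_neg]; ring
    rw [this, natDegree_linear (neg_ne_zero.mpr hΔ.ne')]
  have hqdeg : q.natDegree = d := by
    rw [hq, natDegree_comp, myT_natDegree, hlin, mul_one]
  have hq0 : q ≠ 0 := by
    intro h; rw [h, natDegree_zero] at hqdeg; omega
  have hqeval : ∀ x : ℝ, q.eval x = (Polynomial.Chebyshev.T ℝ d).eval (1 - Δ * x) := by
    intro x; simp [hq, eval_comp]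
  -- angles
  have hangle : ∀ m : ℕ, 1 - Δ * r m = Real.cos ((2 * (m : ℝ) - 1) * Real.pi / (2 * d)) := by
    intro m; rw [hr]; field_simp; ring
  have hroot : ∀ m : ℕ, q.eval (r m) = 0 := by
    intro m
    rw [hqeval, hangle, Polynomial.Chebyshev.T_real_cos]
    have h1 : ((d : ℤ) : ℝ) * ((2 * (m : ℝ) - 1) * Real.pi / (2 * d)) =
        (m : ℝ) * Real.pi - Real.pi / 2 := by
      push_cast; field_simp
    rw [h1, show (m : ℝ) * Real.pi - Real.pi / 2 = -(Real.pi / 2 - m * Real.pi) by ring,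
      Real.cos_neg, Real.cos_pi_div_two_sub, Real.sin_nat_mul_pi]
  -- strict monotonicity
  have hmono : ∀ a b : ℕ, 1 ≤ a → a < b → b ≤ d → r a < r b := by
    intro a b ha hab hbd
    rw [hr, hr]
    have ha' : (1 : ℝ) ≤ a := by exact_mod_cast ha
    have hab' : (a : ℝ) < b := by exact_mod_cast hab
    have hbd' : (b : ℝ) ≤ d := by exact_mod_cast hbd
    have hcos : Real.cos ((2 * (b : ℝ) - 1) * Real.pi / (2 * d)) <
        Real.cos ((2 * (a : ℝ) - 1) * Real.pi / (2 * d)) := by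
      apply Real.cos_lt_cos_of_nonneg_of_le_pi
      · apply div_nonneg (by nlinarith) (by positivity)
      · rw [div_le_iff₀ (by positivity)]; nlinarith
      · rw [div_lt_div_iff₀ (by positivity) (by positivity)]
        nlinarith [mul_lt_mul_of_pos_right (show (2*(a:ℝ)-1) < 2*(b:ℝ)-1 by linarith)
          (show (0:ℝ) < Real.pi * (2*d) by positivity)]
    have := mul_lt_mul_of_pos_left (by linarith : 1 - Real.cos ((2 * (a : ℝ) - 1) * Real.pi / (2 * d)) < 1 - Real.cos ((2 * (b : ℝ) - 1) * Real.pi / (2 * d))) (by positivity : (0:ℝ) < 1 / Δ)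
    linarith
  -- roots of q are exactly the r m
  set M : Multiset ℝ := (Finset.Icc 1 d).val.map r with hM
  have hMnodup : M.Nodup := by
    refine Multiset.Nodup.map_on ?_ (Finset.Icc 1 d).nodup
    intro a ha b hb hab
    simp only [Finset.mem_Icc, ← Finset.mem_def] at ha hb
    rcases lt_trichotomy a b with h | h | h
    · exact absurd hab (hmono a b ha.1 h hb.2).ne
    · exact h
    · exact absurd hab.symm (hmono b a hb.1 h ha.2).ne
  have hMcard : Multiset.card M = d := by
    simp [hM, Nat.card_Icc]
  have hMle : M ≤ q.roots := by
    rw [Multiset.le_iff_subset hMnodup]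
    intro x hx
    simp only [hM, Multiset.mem_map, ← Finset.mem_def, Finset.mem_Icc] at hx
    obtain ⟨m, _, rfl⟩ := hx
    exact (mem_roots hq0).mpr (hroot m)
  have hMeq : q.roots = M := by
    refine (Multiset.eq_of_le_of_card_le hMle ?_).symm
    rw [hMcard]
    calc Multiset.card q.roots ≤ q.natDegree := q.card_roots'
      _ = d := hqdeg
  have hqzero : ∀ x : ℝ, q.eval x = 0 ↔ ∃ m : ℕ, 1 ≤ m ∧ m ≤ d ∧ x = r m := by
    intro x
    constructor
    · intro h
      have hx : x ∈ q.roots := (mem_roots hq0).mpr h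
      rw [hMeq] at hx
      simp only [hM, Multiset.mem_map, ← Finset.mem_def, Finset.mem_Icc] at hx
      obtain ⟨m, ⟨h1, h2⟩, rfl⟩ := hx
      exact ⟨m, h1, h2, rfl⟩
    · rintro ⟨m, _, _, rfl⟩
      exact hroot m
  refine ⟨?_, ?_, ?_, ?_⟩
  · -- degree
    have hc : ((X : ℝ[X]) * (X - C (1 / (n : ℝ))) * (X - C (2 / (n : ℝ)))).Monic :=
      (monic_X.mul (monic_X_sub_C _)).mul (monic_X_sub_C _)
    have hcdeg : ((X : ℝ[X]) * (X - C (1 / (n : ℝ))) * (X - C (2 / (n : ℝ)))).natDegree = 3 := by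
      rw [natDegree_mul (by exact (monic_X.mul (monic_X_sub_C _)).ne_zero) (X_sub_C_ne_zero _),
        natDegree_mul X_ne_zero (X_sub_C_ne_zero _), natDegree_X, natDegree_X_sub_C,
        natDegree_X_sub_C]
    rw [hp, natDegree_mul hc.ne_zero hq0, hcdeg, hqdeg]
    omega
  · -- roots
    intro x
    rw [hp]
    simp only [eval_mul, eval_sub, eval_X, eval_C, mul_eq_zero]
    rw [hqzero x, sub_eq_zero, sub_eq_zero]
    tauto
  · -- 2/n < r 1
    rw [hr]
    have h1 : (2 * (1 : ℝ) - 1) * Real.pi / (2 * d) = Real.pi / (2 * d) := by ring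
    rw [Nat.cast_one, h1]
    calc 2 / (n : ℝ) = (1 / Δ) * (2 * Δ / n) := by field_simp
      _ < (1 / Δ) * (1 - Real.cos (Real.pi / (2 * d))) :=
        mul_lt_mul_of_pos_left hgap (by positivity)
  · intro m h1 h2
    exact hmono m (m + 1) h1 (Nat.lt_succ_self m) h2
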